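/- For real numbers α, β, γ, δ with σ = (α+β+γ+δ)/2 and ᾱ = σ−α, β̄ = σ−β, γ̄ = σ−γ, δ̄ = σ−δ all having nonzero sine, let M = (sin α sin β sin γ sin δ)/(sin ᾱ sin β̄ sin γ̄ sin δ̄). Then 1 − M = (sin σ · sin(ᾱ−β) · sin(γ̄−β) · sin(δ̄−β))/(sin ᾱ sin β̄ sin γ̄ sin δ̄). -/
import Mathlib


open Real

private lemma pts (x y : ℝ) :
    Real.sin x * Real.sin y = (Real.cos (x - y) - Real.cos (x + y)) / 2 := by
  rw [Real.cos_sub, Real.cos_add]; ring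

private lemma key (α β γ δ : ℝ) :
    Real.sin ((α + β + γ + δ) / 2 - α) * Real.sin ((α + β + γ + δ) / 2 - β) *
        Real.sin ((α + β + γ + δ) / 2 - γ) * Real.sin ((α + β + γ + δ) / 2 - δ) -
      Real.sin α * Real.sin β * Real.sin γ * Real.sin δ =
    Real.sin ((α + β + γ + δ) / 2) * Real.sin ((α + β + γ + δ) / 2 - α - β) *
      Real.sin ((α + β + γ + δ) / 2 - γ - β) * Real.sin ((α + β + γ + δ) / 2 - δ - β) := by
  set s := (α + β + γ + δ) / 2 with hs
  have h1 : Real.sin (s - γ) * Real.sin (s - α) = (Real.cos (α - γ) - Real.cos (β + δ)) / 2 := by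
    rw [pts, show (s - γ) - (s - α) = α - γ by rw [hs]; ring,
      show (s - γ) + (s - α) = β + δ by rw [hs]; ring]
  have h2 : Real.sin (s - δ) * Real.sin (s - β) = (Real.cos (β - δ) - Real.cos (α + γ)) / 2 := by
    rw [pts, show (s - δ) - (s - β) = β - δ by rw [hs]; ring,
      show (s - δ) + (s - β) = α + γ by rw [hs]; ring]
  have h3 : Real.sin s * Real.sin (s - α - β) = (Real.cos (α + β) - Real.cos (γ + δ)) / 2 := by
    rw [pts, show s - (s - α - β) = α + β by ring,
      show s + (s - α - β) = γ + δ by rw [hs]; ring]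
  have h4 : Real.sin (s - δ - β) * Real.sin (s - γ - β) =
      (Real.cos (γ - δ) - Real.cos (α - β)) / 2 := by
    rw [pts, show (s - δ - β) - (s - γ - β) = γ - δ by ring,
      show (s - δ - β) + (s - γ - β) = α - β by rw [hs]; ring]
  have h5 : Real.sin α * Real.sin γ = (Real.cos (α - γ) - Real.cos (α + γ)) / 2 := pts α γ
  have h6 : Real.sin β * Real.sin δ = (Real.cos (β - δ) - Real.cos (β + δ)) / 2 := pts β δ
  have expand : ((Real.cos (α - γ) - Real.cos (β + δ)) / 2) *
        ((Real.cos (β - δ) - Real.cos (α + γ)) / 2) -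
      ((Real.cos (α - γ) - Real.cos (α + γ)) / 2) *
        ((Real.cos (β - δ) - Real.cos (β + δ)) / 2) =
      ((Real.cos (α + β) - Real.cos (γ + δ)) / 2) *
        ((Real.cos (γ - δ) - Real.cos (α - β)) / 2) := by
    simp only [Real.cos_sub, Real.cos_add]
    linear_combination ((Real.cos β ^ 2 - Real.cos γ ^ 2) / 4) * Real.sin_sq_add_cos_sq α +
      ((1 - Real.cos δ ^ 2 - Real.sin α ^ 2) / 4) * Real.sin_sq_add_cos_sq β +
      ((Real.sin α ^ 2 + Real.cos δ ^ 2 - 1) / 4) * Real.sin_sq_add_cos_sq γ +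
      ((Real.sin β ^ 2 - Real.sin γ ^ 2) / 4) * Real.sin_sq_add_cos_sq δ
  calc Real.sin (s - α) * Real.sin (s - β) * Real.sin (s - γ) * Real.sin (s - δ) -
        Real.sin α * Real.sin β * Real.sin γ * Real.sin δ
      = (Real.sin (s - γ) * Real.sin (s - α)) * (Real.sin (s - δ) * Real.sin (s - β)) -
        (Real.sin α * Real.sin γ) * (Real.sin β * Real.sin δ) := by ring
    _ = ((Real.cos (α - γ) - Real.cos (β + δ)) / 2) *
          ((Real.cos (β - δ) - Real.cos (α + γ)) / 2) -
        ((Real.cos (α - γ) - Real.cos (α + γ)) / 2) *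
          ((Real.cos (β - δ) - Real.cos (β + δ)) / 2) := by rw [h1, h2, h5, h6]
    _ = ((Real.cos (α + β) - Real.cos (γ + δ)) / 2) *
          ((Real.cos (γ - δ) - Real.cos (α - β)) / 2) := expand
    _ = (Real.sin s * Real.sin (s - α - β)) * (Real.sin (s - δ - β) * Real.sin (s - γ - β)) := by
          rw [h3, h4]
    _ = Real.sin s * Real.sin (s - α - β) * Real.sin (s - γ - β) * Real.sin (s - δ - β) := by
          ring

theorem modulus_identity (α β γ δ : ℝ)
    (σ : ℝ) (hσ : σ = (α + β + γ + δ) / 2)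
    (hA : Real.sin (σ - α) ≠ 0) (hB : Real.sin (σ - β) ≠ 0)
    (hC : Real.sin (σ - γ) ≠ 0) (hD : Real.sin (σ - δ) ≠ 0) :
    1 - (Real.sin α * Real.sin β * Real.sin γ * Real.sin δ) /
          (Real.sin (σ - α) * Real.sin (σ - β) * Real.sin (σ - γ) * Real.sin (σ - δ)) =
      (Real.sin σ * Real.sin ((σ - α) - β) * Real.sin ((σ - γ) - β) *
          Real.sin ((σ - δ) - β)) /
        (Real.sin (σ - α) * Real.sin (σ - β) * Real.sin (σ - γ) * Real.sin (σ - δ)) := by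
  have hk := key α β γ δ
  rw [← hσ] at hk
  field_simp
  linear_combination hk
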